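/- Let G and H be finite simple graphs on disjoint vertex sets such that G has at least one edge and H is edgeless with exactly n ≥ 2 vertices. Then the join G ∨ H is well-f-covered if and only if all of the following hold: (1) G is well-f-covered; (2) any two maximal independent sets of G of cardinality at least 2 have the same cardinality; (3) f(G) = α(G) + 1 = n + 1. In that case f(G ∨ H) = f(G) = n + 1. -/

import Mathlib

/-- `X` induces a forest in `G`: the subgraph induced by `X` is acyclic. -/
def IsInducedForest {V : Type*} (G : SimpleGraph V) (X : Finset V) : Prop :=
  (G.induce (X : Set V)).IsAcyclic

/-- `X` is a maximal induced forest of `G`. -/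
def IsMaximalInducedForest {V : Type*} (G : SimpleGraph V) (X : Finset V) : Prop :=
  IsInducedForest G X ∧ ∀ Y : Finset V, X ⊂ Y → ¬ IsInducedForest G Y

/-- The forest number of `G`: maximum cardinality of an induced forest. -/
noncomputable def forestNum {V : Type*} (G : SimpleGraph V) : ℕ :=
  sSup {n | ∃ X : Finset V, IsInducedForest G X ∧ X.card = n}

/-- `G` is well-f-covered: all maximal induced forests have the same cardinality. -/
def WellFCovered {V : Type*} (G : SimpleGraph V) : Prop :=
  ∀ X Y : Finset V, IsMaximalInducedForest G X → IsMaximalInducedForest G Y →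
    X.card = Y.card

def IsIndepFinset {V : Type*} (G : SimpleGraph V) (X : Finset V) : Prop :=
  ∀ ⦃u⦄, u ∈ X → ∀ ⦃v⦄, v ∈ X → ¬ G.Adj u v

def IsMaximalIndepSet {V : Type*} (G : SimpleGraph V) (X : Finset V) : Prop :=
  IsIndepFinset G X ∧ ∀ Y : Finset V, X ⊂ Y → ¬ IsIndepFinset G Y

noncomputable def indepNum {V : Type*} (G : SimpleGraph V) : ℕ :=
  sSup {n | ∃ X : Finset V, IsIndepFinset G X ∧ X.card = n}

def WellCovered {V : Type*} (G : SimpleGraph V) : Prop :=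
  ∀ X Y : Finset V, IsMaximalIndepSet G X → IsMaximalIndepSet G Y → X.card = Y.card

/-- The join of two graphs on disjoint vertex sets. -/
def joinGraph {V W : Type*} (G : SimpleGraph V) (H : SimpleGraph W) :
    SimpleGraph (V ⊕ W) where
  Adj a b :=
    match a, b with
    | Sum.inl u, Sum.inl v => G.Adj u v
    | Sum.inr u, Sum.inr v => H.Adj u v
    | Sum.inl _, Sum.inr _ => True
    | Sum.inr _, Sum.inl _ => True
  symm := ⟨by rintro (u|u) (v|v) h <;> first | exact h.symm | trivial⟩
  loopless := ⟨by rintro (u|u) h <;> exact SimpleGraph.irrefl _ h⟩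

open SimpleGraph

set_option linter.unusedSectionVars false
section Aux
variable {V W : Type*} [Fintype V] [Fintype W] [DecidableEq V] [DecidableEq W]

lemma acyclic_of_hom {α β} {G : SimpleGraph α} {G' : SimpleGraph β}
    (f : G →g G') (hf : Function.Injective f) (h : G'.IsAcyclic) : G.IsAcyclic := by
  intro v c hc
  exact h (c.map f) (hc.map hf)

lemma forest_mono {G : SimpleGraph V} {X Y : Finset V} (hXY : X ⊆ Y)
    (hY : IsInducedForest G Y) : IsInducedForest G X := by
  refine acyclic_of_hom ⟨fun x => ⟨x.1, hXY x.2⟩, ?_⟩ ?_ hY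
  · intro a b hab; exact hab
  · intro a b hab; have h := congrArg Subtype.val hab; exact Subtype.ext h

lemma join_adj {G : SimpleGraph V} {x y : V ⊕ W} :
    (joinGraph G (⊥ : SimpleGraph W)).Adj x y ↔
      (∃ u v, x = Sum.inl u ∧ y = Sum.inl v ∧ G.Adj u v) ∨
      (∃ u v, x = Sum.inl u ∧ y = Sum.inr v) ∨
      (∃ u v, x = Sum.inr u ∧ y = Sum.inl v) := by
  cases x <;> cases y <;> simp [joinGraph]

-- fact (i): restriction of a forest of the join to V is a forest of G
lemma forest_toLeft {G : SimpleGraph V} {X : Finset (V ⊕ W)}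
    (hX : IsInducedForest (joinGraph G (⊥ : SimpleGraph W)) X) :
    IsInducedForest G X.toLeft := by
  refine acyclic_of_hom ⟨fun a => ⟨Sum.inl a.1, Finset.mem_coe.mpr (Finset.mem_toLeft.mp (Finset.mem_coe.mp a.2))⟩, ?_⟩ ?_ hX
  · intro a b hab; exact hab
  · intro a b hab
    have h2 : (Sum.inl a.1 : V ⊕ W) = Sum.inl b.1 := congrArg Subtype.val hab
    exact Subtype.ext (Sum.inl_injective h2)

lemma edgeless_acyclic {α} {G : SimpleGraph α} (h : ∀ u v, ¬ G.Adj u v) : G.IsAcyclic := by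
  intro v c hc
  cases c with
  | nil => exact hc.ne_nil rfl
  | cons hadj p => exact h _ _ hadj

lemma star_acyclic {α} {G : SimpleGraph α} (a : α)
    (h : ∀ u v, G.Adj u v → u = a ∨ v = a) : G.IsAcyclic := by
  intro v c hc
  have h3len := hc.three_le_length
  match c, hc, h3len with
  | .cons (v := b) h1 (.cons (v := c') h2 r), hc, h3len =>
    by_cases hb : b = a
    · match r, hc, h3len with
      | .nil, hc, h3len => simp [SimpleGraph.Walk.length_cons] at h3len
      | .cons (v := d) h3 r', hc, h3len =>
        have hc' : c' ≠ a := fun hca => h2.ne (by rw [hb, hca])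
        have hd : d = a := (h _ _ h3).resolve_left hc'
        have hnd := hc.2
        have hmem : a ∈ r'.support := by rw [← hd]; exact r'.start_mem_support
        simp [SimpleGraph.Walk.support_cons, hb, hd] at hnd
        exact hnd.1.2 hmem
    · have hv : v = a := (h _ _ h1).resolve_right hb
      have hc'' : c' = a := (h _ _ h2).resolve_left hb
      have hnd := hc.edges_nodup
      simp [SimpleGraph.Walk.edges_cons, hv, hc''] at hnd

lemma triangle_not_acyclic {α} {G : SimpleGraph α} {a b c : α}
    (hab : G.Adj a b) (hbc : G.Adj b c) (hca : G.Adj c a) : ¬ G.IsAcyclic := by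
  intro h
  refine h (Walk.cons hab (Walk.cons hbc (Walk.cons hca Walk.nil))) ?_
  have h1 := hab.ne
  have h2 := hbc.ne
  have h3 := hca.ne
  constructor
  · constructor
    · constructor
      simp [Walk.edges_cons, Sym2.eq, Sym2.rel_iff']
      tauto
    · simp
  · simp [Walk.support_cons]
    tauto

lemma square_not_acyclic {α} {G : SimpleGraph α} {a b c d : α}
    (hab : G.Adj a b) (hbc : G.Adj b c) (hcd : G.Adj c d) (hda : G.Adj d a)
    (hac : a ≠ c) (hbd : b ≠ d) : ¬ G.IsAcyclic := by
  intro h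
  refine h (Walk.cons hab (Walk.cons hbc (Walk.cons hcd (Walk.cons hda Walk.nil)))) ?_
  have h1 := hab.ne
  have h2 := hbc.ne
  have h3 := hcd.ne
  have h4 := hda.ne
  constructor
  · constructor
    · constructor
      simp [Walk.edges_cons, Sym2.eq, Sym2.rel_iff']
      tauto
    · simp
  · simp [Walk.support_cons]
    tauto

/-- An independent finset induces a forest. -/
lemma indep_forest {G : SimpleGraph V} {A : Finset V} (hA : IsIndepFinset G A) :
    IsInducedForest G A :=
  edgeless_acyclic (fun u v huv => hA u.2 v.2 huv)

lemma card_le_one_indep {G : SimpleGraph V} {A : Finset V} (hA : A.card ≤ 1) :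
    IsIndepFinset G A := by
  intro u hu v hv huv
  exact huv.ne (Finset.card_le_one.mp hA u hu v hv)

lemma not_indep_iff {G : SimpleGraph V} {A : Finset V} :
    ¬ IsIndepFinset G A ↔ ∃ u ∈ A, ∃ v ∈ A, G.Adj u v := by
  unfold IsIndepFinset; push_neg; rfl

/-- Extension to a maximal set satisfying `P`. -/
lemma exists_maximal_superset {α : Type*} [Fintype α] [DecidableEq α] (P : Finset α → Prop)
    {X : Finset α} (hX : P X) : ∃ Y, X ⊆ Y ∧ P Y ∧ ∀ Z, Y ⊂ Z → ¬ P Z := by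
  classical
  let S : Finset (Finset α) := Finset.univ.filter (fun Y => X ⊆ Y ∧ P Y)
  have hne : S.Nonempty := ⟨X, by simp [S, hX]⟩
  obtain ⟨Y, hYS, hmax⟩ := S.exists_max_image Finset.card hne
  simp only [S, Finset.mem_filter, Finset.mem_univ, true_and] at hYS
  refine ⟨Y, hYS.1, hYS.2, fun Z hZ hPZ => ?_⟩
  have hZS : Z ∈ S := by simp [S, hPZ, hYS.1.trans hZ.subset]
  exact absurd (hmax Z hZS) (not_le.mpr (Finset.card_lt_card hZ))

lemma sSup_eq_of {S : Set ℕ} {k : ℕ} (h1 : k ∈ S) (h2 : ∀ m ∈ S, m ≤ k) : sSup S = k :=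
  le_antisymm (csSup_le ⟨k, h1⟩ h2) (le_csSup ⟨k, h2⟩ h1)

section JoinLemmas
variable {G : SimpleGraph V}

lemma mem_coe_left {X : Finset (V ⊕ W)} {a : V} (h : a ∈ X.toLeft) :
    (Sum.inl a : V ⊕ W) ∈ (X : Set (V ⊕ W)) :=
  Finset.mem_coe.mpr (Finset.mem_toLeft.mp h)

lemma mem_coe_right {X : Finset (V ⊕ W)} {b : W} (h : b ∈ X.toRight) :
    (Sum.inr b : V ⊕ W) ∈ (X : Set (V ⊕ W)) :=
  Finset.mem_coe.mpr (Finset.mem_toRight.mp h)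

/-- If `X` lives entirely in the left part and its left part is a forest, `X` is a forest. -/
lemma forest_join_of_left {X : Finset (V ⊕ W)} (hB : X.toRight = ∅)
    (hA : IsInducedForest G X.toLeft) :
    IsInducedForest (joinGraph G (⊥ : SimpleGraph W)) X := by
  let f : {x : V ⊕ W // x ∈ (X : Set (V ⊕ W))} → {a : V // a ∈ (X.toLeft : Set V)} := fun x =>
    match x with
    | ⟨Sum.inl a, hx⟩ => ⟨a, Finset.mem_coe.mpr (Finset.mem_toLeft.mpr (Finset.mem_coe.mp hx))⟩
    | ⟨Sum.inr b, hx⟩ => absurd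
        (show b ∈ X.toRight from Finset.mem_toRight.mpr (Finset.mem_coe.mp hx))
        (by simp [hB])
  refine acyclic_of_hom ⟨f, ?_⟩ ?_ hA
  · rintro ⟨(a|b), hx⟩ ⟨(a'|b'), hy⟩ hadj
    · exact hadj
    · exact absurd (show b' ∈ X.toRight from Finset.mem_toRight.mpr (Finset.mem_coe.mp hy))
        (by simp [hB])
    · exact absurd (show b ∈ X.toRight from Finset.mem_toRight.mpr (Finset.mem_coe.mp hx))
        (by simp [hB])
    · exact absurd (show b ∈ X.toRight from Finset.mem_toRight.mpr (Finset.mem_coe.mp hx))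
        (by simp [hB])
  · rintro ⟨(a|b), hx⟩ ⟨(a'|b'), hy⟩ hf
    · have : a = a' := congrArg Subtype.val hf
      exact Subtype.ext (by simp [this])
    · exact absurd (show b' ∈ X.toRight from Finset.mem_toRight.mpr (Finset.mem_coe.mp hy))
        (by simp [hB])
    · exact absurd (show b ∈ X.toRight from Finset.mem_toRight.mpr (Finset.mem_coe.mp hx))
        (by simp [hB])
    · exact absurd (show b ∈ X.toRight from Finset.mem_toRight.mpr (Finset.mem_coe.mp hx))
        (by simp [hB])

/-- If the left part has at most one vertex, `X` is a forest in the join. -/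
lemma forest_join_of_small {X : Finset (V ⊕ W)} (hA : X.toLeft.card ≤ 1) :
    IsInducedForest (joinGraph G (⊥ : SimpleGraph W)) X := by
  rcases X.toLeft.eq_empty_or_nonempty with he | ⟨a0, ha0⟩
  · refine edgeless_acyclic ?_
    rintro ⟨(a|b), hx⟩ ⟨(a'|b'), hy⟩ hadj
    · exact absurd (show a ∈ X.toLeft from Finset.mem_toLeft.mpr (Finset.mem_coe.mp hx))
        (by simp [he])
    · exact absurd (show a ∈ X.toLeft from Finset.mem_toLeft.mpr (Finset.mem_coe.mp hx))
        (by simp [he])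
    · exact absurd (show a' ∈ X.toLeft from Finset.mem_toLeft.mpr (Finset.mem_coe.mp hy))
        (by simp [he])
    · exact hadj
  · refine star_acyclic ⟨Sum.inl a0, mem_coe_left ha0⟩ ?_
    have huniq := Finset.card_le_one.mp hA
    rintro ⟨(a|b), hx⟩ ⟨(a'|b'), hy⟩ hadj
    · left
      exact Subtype.ext (by
        simp [huniq a (Finset.mem_toLeft.mpr (Finset.mem_coe.mp hx)) a0 ha0])
    · left
      exact Subtype.ext (by
        simp [huniq a (Finset.mem_toLeft.mpr (Finset.mem_coe.mp hx)) a0 ha0])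
    · right
      exact Subtype.ext (by
        simp [huniq a' (Finset.mem_toLeft.mpr (Finset.mem_coe.mp hy)) a0 ha0])
    · exact False.elim hadj

/-- If the left part is independent and the right part has at most one vertex,
`X` is a forest in the join. -/
lemma forest_join_of_indep {X : Finset (V ⊕ W)} (hA : IsIndepFinset G X.toLeft)
    (hB : X.toRight.card ≤ 1) :
    IsInducedForest (joinGraph G (⊥ : SimpleGraph W)) X := by
  rcases X.toRight.eq_empty_or_nonempty with he | ⟨w0, hw0⟩
  · refine edgeless_acyclic ?_
    rintro ⟨(a|b), hx⟩ ⟨(a'|b'), hy⟩ hadj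
    · exact hA (Finset.mem_toLeft.mpr (Finset.mem_coe.mp hx))
        (Finset.mem_toLeft.mpr (Finset.mem_coe.mp hy)) hadj
    · exact absurd (show b' ∈ X.toRight from Finset.mem_toRight.mpr (Finset.mem_coe.mp hy))
        (by simp [he])
    · exact absurd (show b ∈ X.toRight from Finset.mem_toRight.mpr (Finset.mem_coe.mp hx))
        (by simp [he])
    · exact absurd (show b ∈ X.toRight from Finset.mem_toRight.mpr (Finset.mem_coe.mp hx))
        (by simp [he])
  · refine star_acyclic ⟨Sum.inr w0, mem_coe_right hw0⟩ ?_
    have huniq := Finset.card_le_one.mp hB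
    rintro ⟨(a|b), hx⟩ ⟨(a'|b'), hy⟩ hadj
    · exact absurd hadj (hA (Finset.mem_toLeft.mpr (Finset.mem_coe.mp hx))
        (Finset.mem_toLeft.mpr (Finset.mem_coe.mp hy)))
    · right
      exact Subtype.ext (by
        simp [huniq b' (Finset.mem_toRight.mpr (Finset.mem_coe.mp hy)) w0 hw0])
    · left
      exact Subtype.ext (by
        simp [huniq b (Finset.mem_toRight.mpr (Finset.mem_coe.mp hx)) w0 hw0])
    · exact False.elim hadj

/-- Fact (ii): a forest of the join with at least two left vertices has at most one
right vertex. -/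
lemma forest_join_right_small {X : Finset (V ⊕ W)}
    (hX : IsInducedForest (joinGraph G (⊥ : SimpleGraph W)) X)
    (hA : 2 ≤ X.toLeft.card) : X.toRight.card ≤ 1 := by
  by_contra hB
  push_neg at hB
  obtain ⟨a1, ha1, a2, ha2, ha⟩ := Finset.one_lt_card.mp hA
  obtain ⟨b1, hb1, b2, hb2, hb⟩ := Finset.one_lt_card.mp hB
  refine square_not_acyclic (a := ⟨Sum.inl a1, mem_coe_left ha1⟩)
    (b := ⟨Sum.inr b1, mem_coe_right hb1⟩) (c := ⟨Sum.inl a2, mem_coe_left ha2⟩)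
    (d := ⟨Sum.inr b2, mem_coe_right hb2⟩) ?_ ?_ ?_ ?_ ?_ ?_ hX
  · trivial
  · trivial
  · trivial
  · trivial
  · intro h; exact ha (Sum.inl_injective (congrArg Subtype.val h))
  · intro h; exact hb (Sum.inr_injective (congrArg Subtype.val h))

/-- Fact (iii): a forest of the join with an edge on the left has empty right part. -/
lemma forest_join_no_edge_right {X : Finset (V ⊕ W)}
    (hX : IsInducedForest (joinGraph G (⊥ : SimpleGraph W)) X)
    {a1 a2 : V} (ha1 : a1 ∈ X.toLeft) (ha2 : a2 ∈ X.toLeft) (hadj : G.Adj a1 a2)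
    {b : W} (hb : b ∈ X.toRight) : False := by
  refine triangle_not_acyclic (a := ⟨Sum.inl a1, mem_coe_left ha1⟩)
    (b := ⟨Sum.inl a2, mem_coe_left ha2⟩) (c := ⟨Sum.inr b, mem_coe_right hb⟩)
    ?_ ?_ ?_ hX
  · exact hadj
  · trivial
  · trivial

end JoinLemmas

section Higher
variable {G : SimpleGraph V}

lemma insert_indep_forest {F : Finset V} (hind : IsIndepFinset G F) (x : V) :
    IsInducedForest G (insert x F) := by
  refine star_acyclic ⟨x, by simp⟩ ?_
  rintro ⟨u, hu⟩ ⟨v, hv⟩ hadj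
  have hu' : u = x ∨ u ∈ F := by simpa using hu
  have hv' : v = x ∨ v ∈ F := by simpa using hv
  rcases hu' with h | h
  · exact Or.inl (Subtype.ext h)
  · rcases hv' with h2 | h2
    · exact Or.inr (Subtype.ext h2)
    · exact absurd hadj (hind h h2)

lemma maximal_forest_has_edge (hGe : ∃ u v, G.Adj u v)
    {F : Finset V} (hF : IsMaximalInducedForest G F) : ∃ u ∈ F, ∃ v ∈ F, G.Adj u v := by
  by_contra h
  have hind : IsIndepFinset G F := by
    by_contra h2; exact h (not_indep_iff.mp h2)
  obtain ⟨u, v, huv⟩ := hGe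
  have hx : u ∉ F ∨ v ∉ F := by
    by_contra hc; push_neg at hc; exact hind hc.1 hc.2 huv
  rcases hx with hu | hv
  · exact hF.2 _ (Finset.ssubset_insert hu) (insert_indep_forest hind u)
  · exact hF.2 _ (Finset.ssubset_insert hv) (insert_indep_forest hind v)

lemma exists_maximal_forest (G : SimpleGraph V) :
    ∃ F : Finset V, IsMaximalInducedForest G F := by
  obtain ⟨Y, _, hY, hmax⟩ := exists_maximal_superset (IsInducedForest G)
    (indep_forest (card_le_one_indep (by simp : (∅ : Finset V).card ≤ 1)))
  exact ⟨Y, hY, hmax⟩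

lemma forest_extend {X : Finset V} (hX : IsInducedForest G X) :
    ∃ Y, X ⊆ Y ∧ IsMaximalInducedForest G Y := by
  obtain ⟨Y, h1, h2, h3⟩ := exists_maximal_superset (IsInducedForest G) hX
  exact ⟨Y, h1, h2, h3⟩

lemma indep_extend {X : Finset V} (hX : IsIndepFinset G X) :
    ∃ Y, X ⊆ Y ∧ IsMaximalIndepSet G Y := by
  obtain ⟨Y, h1, h2, h3⟩ := exists_maximal_superset (IsIndepFinset G) hX
  exact ⟨Y, h1, h2, h3⟩

/-- If every maximal induced forest has cardinality `k`, then `forestNum = k`. -/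
lemma forestNum_eq_of_all {k : ℕ} (hk : ∀ F, IsMaximalInducedForest G F → F.card = k) :
    forestNum G = k := by
  obtain ⟨F0, hF0⟩ := exists_maximal_forest G
  refine sSup_eq_of ⟨F0, hF0.1, hk F0 hF0⟩ ?_
  rintro m ⟨X, hX, rfl⟩
  obtain ⟨Y, hXY, hY⟩ := forest_extend hX
  calc X.card ≤ Y.card := Finset.card_le_card hXY
  _ = k := hk Y hY

lemma indepNum_attained (G : SimpleGraph V) :
    ∃ X : Finset V, IsIndepFinset G X ∧ X.card = _root_.indepNum G := by
  have hne : {n | ∃ X : Finset V, IsIndepFinset G X ∧ X.card = n}.Nonempty :=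
    ⟨0, ∅, card_le_one_indep (by simp), by simp⟩
  have hbdd : BddAbove {n | ∃ X : Finset V, IsIndepFinset G X ∧ X.card = n} := by
    refine ⟨Fintype.card V, ?_⟩
    rintro m ⟨X, hX, rfl⟩
    exact Finset.card_le_univ X
  exact Nat.sSup_mem hne hbdd

lemma le_indepNum {X : Finset V} (hX : IsIndepFinset G X) : X.card ≤ _root_.indepNum G := by
  refine le_csSup ?_ ⟨X, hX, rfl⟩
  refine ⟨Fintype.card V, ?_⟩
  rintro m ⟨Y, hY, rfl⟩
  exact Finset.card_le_univ Y

lemma forestNum_attained (G : SimpleGraph V) :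
    ∃ X : Finset V, IsInducedForest G X ∧ X.card = forestNum G := by
  have hne : {n | ∃ X : Finset V, IsInducedForest G X ∧ X.card = n}.Nonempty :=
    ⟨0, ∅, indep_forest (card_le_one_indep (by simp)), by simp⟩
  have hbdd : BddAbove {n | ∃ X : Finset V, IsInducedForest G X ∧ X.card = n} := by
    refine ⟨Fintype.card V, ?_⟩
    rintro m ⟨X, hX, rfl⟩
    exact Finset.card_le_univ X
  exact Nat.sSup_mem hne hbdd

end Higher

section Types
variable {G : SimpleGraph V}

lemma eq_disjSum_self {X : Finset (V ⊕ W)} : X = X.toLeft.disjSum X.toRight :=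
  (Finset.toLeft_disjSum_toRight).symm

lemma eq_of_parts {X Y : Finset (V ⊕ W)} (h1 : X.toLeft = Y.toLeft)
    (h2 : X.toRight = Y.toRight) : X = Y := by
  rw [eq_disjSum_self (X := X), eq_disjSum_self (X := Y), h1, h2]

/-- Type I maximal forest : one left vertex plus everything on the right. -/
lemma typeI_maximal (hn2 : 2 ≤ Fintype.card W) (a : V) :
    IsMaximalInducedForest (joinGraph G (⊥ : SimpleGraph W))
      (({a} : Finset V).disjSum Finset.univ) := by
  constructor
  · exact forest_join_of_small (by simp)
  · intro Y hXY hY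
    have hL : ({a} : Finset V) ⊆ Y.toLeft := by
      have := Finset.toLeft_subset_toLeft hXY.subset; simpa using this
    have hR : Y.toRight = Finset.univ := by
      have := Finset.toRight_subset_toRight hXY.subset
      simp only [Finset.toRight_disjSum] at this
      exact Finset.univ_subset_iff.mp this
    have hcard : Y.toLeft.card ≤ 1 := by
      by_contra hc
      push_neg at hc
      have := forest_join_right_small hY hc
      rw [hR] at this
      simp [Finset.card_univ] at this
      omega
    have hLeq : Y.toLeft = {a} :=
      (Finset.eq_of_subset_of_card_le hL (by simpa using hcard)).symm
    exact hXY.ne (eq_of_parts (by simp only [Finset.toLeft_disjSum]; exact hLeq)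
      (by simp only [Finset.toRight_disjSum, hR])).symm

/-- Type II maximal forest : a maximal forest of `G` containing an edge, on the left. -/
lemma typeII_maximal {F : Finset V} (hF : IsMaximalInducedForest G F)
    (hedge : ∃ u ∈ F, ∃ v ∈ F, G.Adj u v) :
    IsMaximalInducedForest (joinGraph G (⊥ : SimpleGraph W))
      (F.disjSum (∅ : Finset W)) := by
  constructor
  · refine forest_join_of_left ?_ ?_ <;>
      simp only [Finset.toRight_disjSum, Finset.toLeft_disjSum]
    exact hF.1
  · intro Y hXY hY
    obtain ⟨u, hu, v, hv, huv⟩ := hedge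
    have hL : F ⊆ Y.toLeft := by
      have := Finset.toLeft_subset_toLeft hXY.subset
      simpa only [Finset.toLeft_disjSum] using this
    have hR : Y.toRight = ∅ := by
      rcases Y.toRight.eq_empty_or_nonempty with he | ⟨b, hb⟩
      · exact he
      · exact absurd (forest_join_no_edge_right hY (hL hu) (hL hv) huv hb) (by simp)
    have hLne : F ≠ Y.toLeft := by
      intro he
      exact hXY.ne (eq_of_parts (by simp only [Finset.toLeft_disjSum]; exact he)
        (by simp only [Finset.toRight_disjSum, hR]))
    exact hF.2 Y.toLeft (Finset.ssubset_iff_subset_ne.mpr ⟨hL, hLne⟩) (forest_toLeft hY)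

/-- Type III maximal forest : a maximal independent set of size ≥ 2 plus one right
vertex. -/
lemma typeIII_maximal {S : Finset V} (hS : IsMaximalIndepSet G S) (hS2 : 2 ≤ S.card)
    (w0 : W) :
    IsMaximalInducedForest (joinGraph G (⊥ : SimpleGraph W))
      (S.disjSum ({w0} : Finset W)) := by
  constructor
  · exact forest_join_of_indep (by simpa using hS.1) (by simp)
  · intro Y hXY hY
    have hL : S ⊆ Y.toLeft := by
      have := Finset.toLeft_subset_toLeft hXY.subset
      simpa only [Finset.toLeft_disjSum] using this
    have hw0 : w0 ∈ Y.toRight := by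
      have := Finset.toRight_subset_toRight hXY.subset
      simp only [Finset.toRight_disjSum] at this
      exact this (Finset.mem_singleton_self w0)
    have hLcard : 2 ≤ Y.toLeft.card := le_trans hS2 (Finset.card_le_card hL)
    have hRcard : Y.toRight.card ≤ 1 := forest_join_right_small hY hLcard
    have hR : Y.toRight = {w0} :=
      (Finset.eq_of_subset_of_card_le (by simpa using hw0) (by simpa using hRcard)).symm
    have hLindep : IsIndepFinset G Y.toLeft := by
      by_contra hni
      obtain ⟨u', hu', v', hv', huv'⟩ := not_indep_iff.mp hni
      exact forest_join_no_edge_right hY hu' hv' huv' hw0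
    have hLeq : S = Y.toLeft := by
      by_contra hne
      exact hS.2 Y.toLeft (Finset.ssubset_iff_subset_ne.mpr ⟨hL, hne⟩) hLindep
    exact hXY.ne (eq_of_parts (by simp only [Finset.toLeft_disjSum]; exact hLeq)
      (by simp only [Finset.toRight_disjSum, hR]))

end Types

section Classify
variable {G : SimpleGraph V}

lemma disjSum_ssubset_left {A A' : Finset V} {B : Finset W} (h : A ⊂ A') :
    A.disjSum B ⊂ A'.disjSum B := by
  refine Finset.ssubset_iff_subset_ne.mpr ⟨Finset.disjSum_mono h.subset (Finset.Subset.refl B), ?_⟩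
  intro he
  have := congrArg Finset.toLeft he
  simp only [Finset.toLeft_disjSum] at this
  exact h.ne this

lemma join_maximal_cases (hV : Nonempty V)
    {X : Finset (V ⊕ W)} (hX : IsMaximalInducedForest (joinGraph G (⊥ : SimpleGraph W)) X) :
    (X.toRight = ∅ ∧ IsMaximalInducedForest G X.toLeft) ∨
    (X.toLeft.card = 1 ∧ X.toRight = Finset.univ) ∨
    (IsMaximalIndepSet G X.toLeft ∧ 2 ≤ X.toLeft.card ∧ X.toRight.card = 1) := by
  rcases X.toRight.eq_empty_or_nonempty with hBe | ⟨w0, hw0⟩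
  · left
    refine ⟨hBe, forest_toLeft hX.1, ?_⟩
    intro A' hsub hA'
    have hXeq : X = X.toLeft.disjSum ∅ := by rw [← hBe]; exact eq_disjSum_self
    refine hX.2 (A'.disjSum ∅) ?_ ?_
    · rw [hXeq]; exact disjSum_ssubset_left hsub
    · exact forest_join_of_left (by simp only [Finset.toRight_disjSum])
        (by simp only [Finset.toLeft_disjSum]; exact hA')
  · right
    have hind : IsIndepFinset G X.toLeft := by
      by_contra hni
      obtain ⟨u', hu', v', hv', huv'⟩ := not_indep_iff.mp hni
      exact forest_join_no_edge_right hX.1 hu' hv' huv' hw0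
    rcases Nat.lt_or_ge X.toLeft.card 2 with hlt | hge
    · have hcard1 : X.toLeft.card = 1 := by
        have hlt' : X.toLeft.card = 0 ∨ X.toLeft.card = 1 := by omega
        rcases hlt' with h0 | h1
        · exfalso
          obtain ⟨a⟩ := hV
          have hnotin : (Sum.inl a : V ⊕ W) ∉ X := by
            intro hin
            have : a ∈ X.toLeft := Finset.mem_toLeft.mpr hin
            simp [Finset.card_eq_zero.mp h0] at this
          refine hX.2 (insert (Sum.inl a) X) (Finset.ssubset_insert hnotin) ?_
          refine forest_join_of_small ?_
          rw [Finset.toLeft_insert_inl]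
          simp [Finset.card_eq_zero.mp h0]
        · exact h1
      left
      refine ⟨hcard1, Finset.eq_univ_iff_forall.mpr fun w => ?_⟩
      by_contra hw
      have hnotin : (Sum.inr w : V ⊕ W) ∉ X := fun hin => hw (Finset.mem_toRight.mpr hin)
      refine hX.2 (insert (Sum.inr w) X) (Finset.ssubset_insert hnotin) ?_
      refine forest_join_of_small ?_
      rw [Finset.toLeft_insert_inr, hcard1]
    · right
      have hRcard : X.toRight.card ≤ 1 := forest_join_right_small hX.1 hge
      have hR1 : X.toRight.card = 1 := by
        have : 1 ≤ X.toRight.card := Finset.card_pos.mpr ⟨w0, hw0⟩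
        omega
      refine ⟨⟨hind, ?_⟩, hge, hR1⟩
      intro A' hsub hA'
      have hXeq : X = X.toLeft.disjSum X.toRight := eq_disjSum_self
      refine hX.2 (A'.disjSum X.toRight) ?_ ?_
      · have h2 := disjSum_ssubset_left (B := X.toRight) hsub
        rwa [← hXeq] at h2
      · exact forest_join_of_indep (by simp only [Finset.toLeft_disjSum]; exact hA')
          (by simp only [Finset.toRight_disjSum]; exact hRcard)

end Classify

end Aux

/-- Let `G` have at least one edge and let `H` be the edgeless graph on
exactly `n ≥ 2` vertices. Then the join `G ∨ H` is well-f-covered iff (1) `G` is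
well-f-covered, (2) any two maximal independent sets of `G` of cardinality at least 2
have the same cardinality, and (3) `f(G) = α(G) + 1 = n + 1`. In that case
`f(G ∨ H) = f(G) = n + 1`. -/
theorem stmt15 {V W : Type*} [Fintype V] [Fintype W] [DecidableEq V] [DecidableEq W]
    (G : SimpleGraph V) (hGe : ∃ u v, G.Adj u v)
    (n : ℕ) (hn : 2 ≤ n) (hW : Fintype.card W = n) :
    (WellFCovered (joinGraph G (⊥ : SimpleGraph W)) ↔
      WellFCovered G ∧
      (∀ X Y : Finset V, IsMaximalIndepSet G X → IsMaximalIndepSet G Y →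
        2 ≤ X.card → 2 ≤ Y.card → X.card = Y.card) ∧
      (forestNum G = _root_.indepNum G + 1 ∧ forestNum G = n + 1)) ∧
    (WellFCovered (joinGraph G (⊥ : SimpleGraph W)) →
      forestNum (joinGraph G (⊥ : SimpleGraph W)) = forestNum G ∧
        forestNum (joinGraph G (⊥ : SimpleGraph W)) = n + 1) := by
  have hn2 : 2 ≤ Fintype.card W := by omega
  obtain ⟨u0, v0, huv0⟩ := hGe
  have hV : Nonempty V := ⟨u0⟩
  have hWne : Nonempty W := Fintype.card_pos_iff.mp (by omega)
  obtain ⟨w0⟩ := hWne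
  have cardXI : ∀ a : V, (({a} : Finset V).disjSum (Finset.univ : Finset W)).card = 1 + n := by
    intro a
    rw [Finset.card_disjSum, Finset.card_singleton, Finset.card_univ, hW]
  -- the key consequences of well-f-coveredness of the join
  have key : WellFCovered (joinGraph G (⊥ : SimpleGraph W)) →
      WellFCovered G ∧
      (∀ X Y : Finset V, IsMaximalIndepSet G X → IsMaximalIndepSet G Y →
        2 ≤ X.card → 2 ≤ Y.card → X.card = Y.card) ∧
      forestNum G = n + 1 ∧ _root_.indepNum G = n ∧
      forestNum (joinGraph G (⊥ : SimpleGraph W)) = n + 1 := by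
    intro hWFC
    have hXI := typeI_maximal (G := G) hn2 u0
    have hMFcard : ∀ F, IsMaximalInducedForest G F → F.card = n + 1 := by
      intro F hF
      have hedge := maximal_forest_has_edge ⟨u0, v0, huv0⟩ hF
      have h := hWFC _ _ (typeII_maximal (W := W) hF hedge) hXI
      rw [Finset.card_disjSum, cardXI] at h
      simp only [Finset.card_empty] at h
      omega
    have hMIcard : ∀ S, IsMaximalIndepSet G S → 2 ≤ S.card → S.card = n := by
      intro S hS hS2
      have h := hWFC _ _ (typeIII_maximal hS hS2 w0) hXI
      rw [Finset.card_disjSum, cardXI, Finset.card_singleton] at h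
      omega
    have hfG : forestNum G = n + 1 := forestNum_eq_of_all hMFcard
    -- independence number computation
    have hαn : _root_.indepNum G = n := by
      obtain ⟨F, hF, hFcard⟩ := forestNum_attained G
      rw [hfG] at hFcard
      obtain ⟨a, b, c, ha, hb, hc, hab, hac, hbc⟩ := Finset.two_lt_card_iff.mp
        (by omega : 2 < F.card)
      have hpair : ∃ x ∈ F, ∃ y ∈ F, x ≠ y ∧ ¬ G.Adj x y := by
        by_contra hno
        push_neg at hno
        exact triangle_not_acyclic
          (a := (⟨a, Finset.mem_coe.mpr ha⟩ : (F : Set V))) (b := ⟨b, Finset.mem_coe.mpr hb⟩)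
          (c := ⟨c, Finset.mem_coe.mpr hc⟩)
          (hno a ha b hb hab) (hno b hb c hc hbc) (hno c hc a ha hac.symm) hF
      obtain ⟨x, hx, y, hy, hxy, hnadj⟩ := hpair
      have hindxy : IsIndepFinset G ({x, y} : Finset V) := by
        intro u hu v hv huv
        simp only [Finset.mem_insert, Finset.mem_singleton] at hu hv
        rcases hu with rfl | rfl <;> rcases hv with rfl | rfl
        · exact G.irrefl huv
        · exact hnadj huv
        · exact hnadj huv.symm
        · exact G.irrefl huv
      obtain ⟨T, hsubT, hT⟩ := indep_extend hindxy
      have hT2 : 2 ≤ T.card := by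
        calc 2 = ({x, y} : Finset V).card := (Finset.card_pair hxy).symm
        _ ≤ T.card := Finset.card_le_card hsubT
      have hTn : T.card = n := hMIcard T hT hT2
      refine sSup_eq_of ⟨T, hT.1, hTn⟩ ?_
      rintro m ⟨I, hI, rfl⟩
      obtain ⟨I', hsubI', hI'⟩ := indep_extend hI
      rcases Nat.lt_or_ge I'.card 2 with hlt | hge
      · have := Finset.card_le_card hsubI'
        omega
      · have := hMIcard I' hI' hge
        have h2 := Finset.card_le_card hsubI'
        omega
    refine ⟨?_, ?_, hfG, hαn, ?_⟩
    · intro F1 F2 h1 h2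
      rw [hMFcard F1 h1, hMFcard F2 h2]
    · intro S1 S2 h1 h2 hc1 hc2
      rw [hMIcard S1 h1 hc1, hMIcard S2 h2 hc2]
    · refine forestNum_eq_of_all ?_
      intro Y hY
      have h := hWFC _ _ hY hXI
      rw [cardXI] at h
      omega
  constructor
  · constructor
    · intro hWFC
      obtain ⟨h1, h2, h3, h4, _⟩ := key hWFC
      exact ⟨h1, h2, by omega, h3⟩
    · rintro ⟨hWFCG, hcond2, hfeq, hfGn⟩
      have hαn : _root_.indepNum G = n := by omega
      have hcommonF : ∀ F, IsMaximalInducedForest G F → F.card = n + 1 := by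
        obtain ⟨F0, hF0⟩ := exists_maximal_forest G
        have hf0 : forestNum G = F0.card :=
          forestNum_eq_of_all (fun F hF => hWFCG F F0 hF hF0)
        intro F hF
        have := hWFCG F F0 hF hF0
        omega
      have hcommonI : ∀ S, IsMaximalIndepSet G S → 2 ≤ S.card → S.card = n := by
        obtain ⟨S0, hS0i, hS0c⟩ := indepNum_attained G
        obtain ⟨S1, hsub1, hS1⟩ := indep_extend hS0i
        have hS1le : S1.card ≤ _root_.indepNum G := le_indepNum hS1.1
        have hS1ge : _root_.indepNum G ≤ S1.card := by
          rw [← hS0c]; exact Finset.card_le_card hsub1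
        have hS1n : S1.card = n := by omega
        intro S hS hS2
        rw [hcond2 S S1 hS hS1 hS2 (by omega), hS1n]
      intro X Y hX hY
      have cardOf : ∀ Z : Finset (V ⊕ W),
          IsMaximalInducedForest (joinGraph G (⊥ : SimpleGraph W)) Z → Z.card = n + 1 := by
        intro Z hZ
        have hcards := Finset.card_toLeft_add_card_toRight (u := Z)
        rcases join_maximal_cases hV hZ with ⟨hBe, hmax⟩ | ⟨h1, hR⟩ | ⟨hmaxI, h2, hR1⟩
        · have hL := hcommonF _ hmax
          rw [hBe] at hcards
          simp at hcards
          omega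
        · have : Z.toRight.card = n := by rw [hR, Finset.card_univ, hW]
          omega
        · have hL := hcommonI _ hmaxI h2
          omega
      rw [cardOf X hX, cardOf Y hY]
  · intro hWFC
    obtain ⟨_, _, h3, _, h5⟩ := key hWFC
    exact ⟨by rw [h5, h3], h5⟩
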